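/- Let T be an ergodic measure-preserving invertible transformation of a probability space that is not mixing. Then there exists a square monotone dynamical sequence of integers that is not ergodic with respect to T. Consequently, T is mixing if and only if every square monotone dynamical sequence is ergodic with respect to T. -/

import Mathlib

open MeasureTheory Filter Finset

/-- Integer iterate of an invertible transformation. -/
noncomputable def iterZ {X : Type*} [MeasurableSpace X] (T : X ≃ᵐ X) (k : ℤ) : X → X :=
  if 0 ≤ k then (⇑T)^[k.toNat] else (⇑T.symm)^[(-k).toNat]

/-- `T` is mixing: correlations of all pairs of measurable sets converge. -/
def IsMixingT {X : Type*} [MeasurableSpace X] (μ : MeasureTheory.Measure X) (T : X ≃ᵐ X) : Prop :=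
  ∀ A B : Set X, MeasurableSet A → MeasurableSet B →
    Tendsto (fun n : ℕ => (μ (iterZ T (n : ℤ) '' A ∩ B)).toReal)
      atTop (nhds ((μ A).toReal * (μ B).toReal))

/-- A dynamical sequence `(s, r)` (with `r → ∞`) is square monotone. -/
def SquareMonotoneSeq (r : ℕ → ℕ) (s : ℕ → ℕ → ℤ) : Prop :=
  Tendsto r atTop atTop ∧
  ∀ M : ℕ, 0 < M →
    Tendsto (fun n : ℕ =>
        (((Finset.range (r n) ×ˢ Finset.range (r n)).filter
            (fun p => |s n p.1 - s n p.2| < (M : ℤ))).card : ℝ) / (r n : ℝ) ^ 2)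
      atTop (nhds 0)

/-- A dynamical sequence is ergodic with respect to `T` (L² Cesàro averages of indicators). -/
def ErgodicDynSeqL2 {X : Type*} [MeasurableSpace X] (μ : MeasureTheory.Measure X) (T : X ≃ᵐ X)
    (r : ℕ → ℕ) (s : ℕ → ℕ → ℤ) : Prop :=
  ∀ B : Set X, MeasurableSet B →
    Tendsto (fun n : ℕ =>
        ∫ x, |(1 / (r n : ℝ)) * ∑ i ∈ Finset.range (r n),
            B.indicator (fun _ => (1 : ℝ)) (iterZ T (-(s n i)) x) - (μ B).toReal| ^ 2 ∂μ)
      atTop (nhds 0)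

/- ### Auxiliary lemmas -/

lemma aux_integrable_of_bdd {X : Type*} [MeasurableSpace X] {μ : Measure X}
    [IsProbabilityMeasure μ] {f : X → ℝ} (C : ℝ) (hm : Measurable f)
    (hb : ∀ x, |f x| ≤ C) : Integrable f μ :=
  (integrable_const C).mono' hm.aestronglyMeasurable (ae_of_all _ (fun x => by simpa using hb x))

lemma aux_iterZ_natCast {X : Type*} [MeasurableSpace X] (T : X ≃ᵐ X) (m : ℕ) :
    iterZ T (m : ℤ) = (⇑T)^[m] := by
  simp [iterZ]

lemma aux_toReal_le_one {X : Type*} [MeasurableSpace X] (μ : Measure X)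
    [IsProbabilityMeasure μ] (S : Set X) : (μ S).toReal ≤ 1 := by
  have h1 : μ S ≤ 1 := prob_le_one
  calc (μ S).toReal ≤ (1 : ENNReal).toReal :=
        ENNReal.toReal_mono ENNReal.one_ne_top h1
    _ = 1 := ENNReal.toReal_one

/-- The key correlation computation: the integral of the product of recentred indicators
equals the correlation. -/
lemma aux_corr {X : Type*} [MeasurableSpace X] (μ : Measure X) [IsProbabilityMeasure μ]
    (T : X ≃ᵐ X) (hT : MeasurePreserving T μ μ) {A B : Set X}
    (hA : MeasurableSet A) (hB : MeasurableSet B) (m : ℕ) :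
    ∫ x, (B.indicator (fun _ => (1 : ℝ)) ((⇑T)^[m] x) - (μ B).toReal) *
        (A.indicator (fun _ => (1 : ℝ)) x - (μ A).toReal) ∂μ
      = (μ ((⇑T)^[m] '' A ∩ B)).toReal - (μ A).toReal * (μ B).toReal := by
  set a := (μ A).toReal
  set b := (μ B).toReal
  have hmeasIt : Measurable ((⇑T)^[m]) := T.measurable.iterate m
  have hpre : MeasurableSet ((⇑T)^[m] ⁻¹' B) := hB.preimage hmeasIt
  have hmp : MeasurePreserving ((⇑T)^[m]) μ μ := hT.iterate m
  set P : X → ℝ := fun x => B.indicator (fun _ => (1 : ℝ)) ((⇑T)^[m] x) with hP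
  set Q : X → ℝ := fun x => A.indicator (fun _ => (1 : ℝ)) x with hQ
  have hPeq : P = ((⇑T)^[m] ⁻¹' B).indicator (fun _ => (1 : ℝ)) := by
    funext x
    by_cases h1 : (⇑T)^[m] x ∈ B <;> simp [hP, Set.indicator_apply, h1, Set.mem_preimage]
  have hPQeq : (fun x => P x * Q x) = (((⇑T)^[m] ⁻¹' B) ∩ A).indicator (fun _ => (1 : ℝ)) := by
    funext x
    by_cases h1 : (⇑T)^[m] x ∈ B <;> by_cases h2 : x ∈ A <;>
      simp [hP, hQ, Set.indicator_apply, h1, h2, Set.mem_preimage]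
  have hintP : Integrable P μ := by
    rw [hPeq]; exact (integrable_const 1).indicator hpre
  have hintQ : Integrable Q μ := (integrable_const 1).indicator hA
  have hintPQ : Integrable (fun x => P x * Q x) μ := by
    rw [hPQeq]; exact (integrable_const 1).indicator (hpre.inter hA)
  -- values of the three integrals
  have hQval : ∫ x, Q x ∂μ = a := by
    rw [hQ]
    rw [integral_indicator_const (1 : ℝ) hA, smul_eq_mul, mul_one]
    rfl
  have hPval : ∫ x, P x ∂μ = b := by
    rw [hPeq, integral_indicator_const (1 : ℝ) hpre, smul_eq_mul, mul_one]
    have := hmp.measure_preimage hB.nullMeasurableSet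
    rw [measureReal_def, this]
  have hPQval : ∫ x, P x * Q x ∂μ = (μ ((⇑T)^[m] '' A ∩ B)).toReal := by
    rw [hPQeq, integral_indicator_const (1 : ℝ) (hpre.inter hA), smul_eq_mul, mul_one]
    rw [measureReal_def]
    congr 1
    have hLI : Function.LeftInverse ⇑T.symm ⇑T := fun x => T.symm_apply_apply x
    have hRI : Function.RightInverse ⇑T.symm ⇑T := fun x => T.apply_symm_apply x
    have him_eq : (⇑T)^[m] '' A = (⇑T.symm)^[m] ⁻¹' A := by
      rw [Set.image_eq_preimage_of_inverse (hLI.iterate m) (hRI.iterate m)]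
    have hmeas_im : MeasurableSet ((⇑T)^[m] '' A) := by
      rw [him_eq]; exact hA.preimage (T.symm.measurable.iterate m)
    have hinj : Function.Injective ((⇑T)^[m]) := T.injective.iterate m
    have hset : (⇑T)^[m] ⁻¹' ((⇑T)^[m] '' A ∩ B) = A ∩ (⇑T)^[m] ⁻¹' B := by
      rw [Set.preimage_inter, Set.preimage_image_eq _ hinj]
    calc μ ((⇑T)^[m] ⁻¹' B ∩ A)
        = μ (A ∩ (⇑T)^[m] ⁻¹' B) := by rw [Set.inter_comm]
      _ = μ ((⇑T)^[m] ⁻¹' ((⇑T)^[m] '' A ∩ B)) := by rw [hset]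
      _ = μ ((⇑T)^[m] '' A ∩ B) := hmp.measure_preimage (hmeas_im.inter hB).nullMeasurableSet
  have hexp : (fun x => (P x - b) * (Q x - a))
      = fun x => (P x * Q x - b * Q x) - (a * P x - a * b) := by
    funext x; ring
  have i1 : Integrable (fun x => P x * Q x - b * Q x) μ := hintPQ.sub (hintQ.const_mul b)
  have i2 : Integrable (fun x => a * P x - a * b) μ :=
    (hintP.const_mul a).sub (integrable_const _)
  rw [show (fun x => (B.indicator (fun _ => (1 : ℝ)) ((⇑T)^[m] x) - b) *
        (A.indicator (fun _ => (1 : ℝ)) x - a)) = fun x => (P x - b) * (Q x - a) from rfl]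
  rw [hexp]
  rw [integral_sub i1 i2, integral_sub hintPQ (hintQ.const_mul b),
    integral_sub (hintP.const_mul a) (integrable_const _),
    integral_const_mul, integral_const_mul, integral_const, hPval, hQval, hPQval]
  simp [measure_univ]
  ring

/-- If an ergodic transformation of a probability space is not mixing, then some square
monotone dynamical sequence is not ergodic with respect to it; consequently `T` is mixing
if and only if every square monotone dynamical sequence is ergodic with respect to `T`. -/
theorem not_mixing_imp_exists_square_monotone_not_ergodic
    {X : Type*} [MeasurableSpace X] (μ : Measure X) [IsProbabilityMeasure μ]
    (T : X ≃ᵐ X) (hT : MeasurePreserving T μ μ) (hE : Ergodic (⇑T) μ)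
    (hnotmix : ¬ IsMixingT μ T) :
    (∃ r : ℕ → ℕ, ∃ s : ℕ → ℕ → ℤ,
        SquareMonotoneSeq r s ∧ ¬ ErgodicDynSeqL2 μ T r s) ∧
    (IsMixingT μ T ↔
      ∀ r : ℕ → ℕ, ∀ s : ℕ → ℕ → ℤ, SquareMonotoneSeq r s → ErgodicDynSeqL2 μ T r s) := by
  have main : ∃ r : ℕ → ℕ, ∃ s : ℕ → ℕ → ℤ,
      SquareMonotoneSeq r s ∧ ¬ ErgodicDynSeqL2 μ T r s := by
    unfold IsMixingT at hnotmix
    push_neg at hnotmix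
    obtain ⟨A, B, hA, hB, hnt⟩ := hnotmix
    set a := (μ A).toReal with ha
    set b := (μ B).toReal with hb
    set c : ℕ → ℝ := fun n => (μ (iterZ T (n : ℤ) '' A ∩ B)).toReal with hc
    -- extract ε and a frequently-bad set of times
    have hfreq : ∃ ε > 0, ∃ᶠ n in atTop, ε ≤ |c n - a * b| := by
      by_contra h
      push_neg at h
      apply hnt
      rw [Metric.tendsto_atTop]
      intro ε hε
      have h2 := h ε hε
      simp only [← not_le] at h2
      rw [Filter.eventually_atTop] at h2
      obtain ⟨N, hN⟩ := h2
      exact ⟨N, fun n hn => by rw [Real.dist_eq]; exact lt_of_not_ge (hN n hn)⟩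
    obtain ⟨ε, hε, hfr⟩ := hfreq
    have hsplit : (∃ᶠ n in atTop, ε ≤ c n - a * b) ∨ (∃ᶠ n in atTop, ε ≤ -(c n - a * b)) :=
      frequently_or_distrib.mp (hfr.mono (fun n h => le_abs.mp h))
    obtain ⟨σ, hσ1, hfr2⟩ : ∃ σ : ℝ, |σ| = 1 ∧ ∃ᶠ n in atTop, ε ≤ σ * (c n - a * b) := by
      rcases hsplit with h | h
      · exact ⟨1, abs_one, h.mono (fun n hn => by linarith)⟩
      · exact ⟨-1, by norm_num, h.mono (fun n hn => by linarith)⟩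
    obtain ⟨φ, hφmono, hφ⟩ := Filter.extraction_of_frequently_atTop hfr2
    have hgap : ∀ d i : ℕ, φ i + d ≤ φ (i + d) := by
      intro d
      induction d with
      | zero => simp
      | succ d ih =>
        intro i
        have h1 := ih i
        have h2 : φ (i + d) < φ (i + (d + 1)) := hφmono (by omega)
        omega
    refine ⟨fun n => n + 1, fun _ i => -(φ i : ℤ), ⟨?_, ?_⟩, ?_⟩
    · exact tendsto_add_atTop_nat 1
    · -- square monotone
      intro M hM
      show Tendsto (fun n : ℕ =>
        (((Finset.range (n + 1) ×ˢ Finset.range (n + 1)).filter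
            (fun p : ℕ × ℕ => |(-(φ p.1 : ℤ)) - (-(φ p.2 : ℤ))| < (M : ℤ))).card : ℝ)
          / ((n + 1 : ℕ) : ℝ) ^ 2) atTop (nhds 0)
      have hij : ∀ i j : ℕ, (|(-(φ i : ℤ)) - (-(φ j : ℤ))| < (M : ℤ)) →
          (i < j + M ∧ j < i + M) := by
        intro i j h
        have h' := abs_lt.mp h
        rcases le_total i j with hle | hle
        · have hg := hgap (j - i) i
          rw [Nat.add_sub_cancel' hle] at hg
          omega
        · have hg := hgap (i - j) j
          rw [Nat.add_sub_cancel' hle] at hg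
          omega
      have hcard : ∀ n : ℕ,
          ((Finset.range (n + 1) ×ˢ Finset.range (n + 1)).filter
            (fun p : ℕ × ℕ => |(-(φ p.1 : ℤ)) - (-(φ p.2 : ℤ))| < (M : ℤ))).card
            ≤ (n + 1) * (2 * M) := by
        intro n
        have := Finset.card_le_card_of_injOn
          (f := fun p : ℕ × ℕ => (p.1, p.2 + M - p.1))
          (s := (Finset.range (n + 1) ×ˢ Finset.range (n + 1)).filter
            (fun p : ℕ × ℕ => |(-(φ p.1 : ℤ)) - (-(φ p.2 : ℤ))| < (M : ℤ)))
          (t := Finset.range (n + 1) ×ˢ Finset.range (2 * M))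
          (by
            intro p hp
            simp only [Finset.mem_coe, Finset.mem_filter, Finset.mem_product, Finset.mem_range] at hp ⊢
            obtain ⟨⟨h1, h2⟩, h3⟩ := hp
            obtain ⟨h4, h5⟩ := hij p.1 p.2 h3
            omega)
          (by
            rintro ⟨p1, p2⟩ hp ⟨q1, q2⟩ hq heq
            simp only [Finset.coe_filter, Set.mem_setOf_eq, Finset.mem_product,
              Finset.mem_range] at hp hq
            obtain ⟨⟨hp1, hp2⟩, hp3⟩ := hp
            obtain ⟨⟨hq1, hq2⟩, hq3⟩ := hq
            obtain ⟨hp4, hp5⟩ := hij p1 p2 hp3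
            obtain ⟨hq4, hq5⟩ := hij q1 q2 hq3
            simp only [Prod.mk.injEq] at heq ⊢
            omega)
        simpa [Finset.card_product, Finset.card_range] using this
      apply squeeze_zero (fun n => by positivity)
        (g := fun n : ℕ => (2 * M : ℝ) / ((n + 1 : ℕ) : ℝ))
      · intro n
        have hpos : (0 : ℝ) < ((n + 1 : ℕ) : ℝ) := by positivity
        have h1 : ((((Finset.range (n + 1) ×ˢ Finset.range (n + 1)).filter
            (fun p : ℕ × ℕ => |(-(φ p.1 : ℤ)) - (-(φ p.2 : ℤ))| < (M : ℤ))).card : ℝ))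
            ≤ ((n + 1 : ℕ) : ℝ) * (2 * M) := by
          have := hcard n
          calc ((((Finset.range (n + 1) ×ˢ Finset.range (n + 1)).filter
              (fun p : ℕ × ℕ => |(-(φ p.1 : ℤ)) - (-(φ p.2 : ℤ))| < (M : ℤ))).card : ℝ))
              ≤ (((n + 1) * (2 * M) : ℕ) : ℝ) := by exact_mod_cast this
            _ = ((n + 1 : ℕ) : ℝ) * (2 * M) := by push_cast; ring
        calc ((((Finset.range (n + 1) ×ˢ Finset.range (n + 1)).filter
            (fun p : ℕ × ℕ => |(-(φ p.1 : ℤ)) - (-(φ p.2 : ℤ))| < (M : ℤ))).card : ℝ))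
            / ((n + 1 : ℕ) : ℝ) ^ 2
            ≤ (((n + 1 : ℕ) : ℝ) * (2 * M)) / ((n + 1 : ℕ) : ℝ) ^ 2 := by
              gcongr
          _ = (2 * M : ℝ) / ((n + 1 : ℕ) : ℝ) := by field_simp
      · have h2 : (fun n : ℕ => (2 * M : ℝ) / ((n + 1 : ℕ) : ℝ))
            = (fun k : ℕ => (2 * M : ℝ) / (k : ℝ)) ∘ (fun n : ℕ => n + 1) := by
          funext n; simp [Function.comp]
        rw [h2]
        exact (tendsto_const_div_atTop_nhds_zero_nat _).comp (tendsto_add_atTop_nat 1)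
    · -- not ergodic
      intro hErg
      have hTB := hErg B hB
      have hiter : ∀ i : ℕ, iterZ T (-(-(φ i : ℤ))) = (⇑T)^[φ i] := by
        intro i
        rw [neg_neg]
        exact aux_iterZ_natCast T (φ i)
      simp only [hiter] at hTB
      -- lower bound for each n
      have key : ∀ n : ℕ, ε ^ 2 ≤ ∫ x, |(1 / (((n+1 : ℕ)) : ℝ)) * ∑ i ∈ Finset.range (n+1),
          B.indicator (fun _ => (1 : ℝ)) ((⇑T)^[φ i] x) - b| ^ 2 ∂μ := by
        intro n
        set N : ℕ := n + 1 with hN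
        have hNpos : (0 : ℝ) < (N : ℝ) := by positivity
        set p : ℕ → X → ℝ := fun i x => B.indicator (fun _ => (1 : ℝ)) ((⇑T)^[φ i] x) with hp
        set G : X → ℝ := fun x => (1 / ((N : ℕ) : ℝ)) * ∑ i ∈ Finset.range N, p i x - b with hG
        set Q : X → ℝ := fun x => A.indicator (fun _ => (1 : ℝ)) x with hQ
        set H : X → ℝ := fun x => σ * (Q x - a) with hH
        have hmeas_p : ∀ i, Measurable (p i) :=
          fun i => (measurable_const.indicator hB).comp (T.measurable.iterate (φ i))
        have hbd_p : ∀ i x, |p i x| ≤ 1 := by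
          intro i x
          by_cases h : (⇑T)^[φ i] x ∈ B <;> simp [hp, Set.indicator_apply, h]
        have ha0 : 0 ≤ a := ENNReal.toReal_nonneg
        have ha1 : a ≤ 1 := aux_toReal_le_one μ A
        have hb0 : 0 ≤ b := ENNReal.toReal_nonneg
        have hb1 : b ≤ 1 := aux_toReal_le_one μ B
        have hG_meas : Measurable G := by
          apply Measurable.sub _ measurable_const
          exact (Finset.measurable_sum _ (fun i _ => hmeas_p i)).const_mul _
        have hG_bdd : ∀ x, |G x| ≤ 2 := by
          intro x
          have hsum : |∑ i ∈ Finset.range N, p i x| ≤ (N : ℝ) := by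
            calc |∑ i ∈ Finset.range N, p i x| ≤ ∑ i ∈ Finset.range N, |p i x| :=
                Finset.abs_sum_le_sum_abs _ _
              _ ≤ ∑ _i ∈ Finset.range N, (1 : ℝ) :=
                Finset.sum_le_sum (fun i _ => hbd_p i x)
              _ = (N : ℝ) := by simp
          have h1 : |(1 / ((N : ℕ) : ℝ)) * ∑ i ∈ Finset.range N, p i x| ≤ 1 := by
            rw [abs_mul, abs_of_nonneg (by positivity : (0:ℝ) ≤ 1 / ((N : ℕ) : ℝ))]
            calc (1 / ((N : ℕ) : ℝ)) * |∑ i ∈ Finset.range N, p i x|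
                ≤ (1 / ((N : ℕ) : ℝ)) * (N : ℝ) := by
                  apply mul_le_mul_of_nonneg_left hsum (by positivity)
              _ = 1 := by field_simp
          have : |G x| ≤ |(1 / ((N : ℕ) : ℝ)) * ∑ i ∈ Finset.range N, p i x| + |b| := by
            rw [hG]
            exact abs_sub _ _
          rw [abs_of_nonneg hb0] at this
          linarith
        have hH_meas : Measurable H :=
          ((measurable_const.indicator hA).sub measurable_const).const_mul σ
        have hH_bdd : ∀ x, |H x| ≤ 1 := by
          intro x
          rw [hH]
          simp only [abs_mul, hσ1, one_mul]
          by_cases h : x ∈ A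
          · rw [hQ]
            simp only [Set.indicator_of_mem h]
            rw [abs_le]; constructor <;> linarith
          · rw [hQ]
            simp only [Set.indicator_of_notMem h]
            rw [abs_le]; constructor <;> linarith
        -- the inner product computation
        have hGH_eq : ∀ x, G x * H x = (1 / ((N : ℕ) : ℝ)) *
            ∑ i ∈ Finset.range N, σ * ((p i x - b) * (Q x - a)) := by
          intro x
          have hsum1 : ∑ i ∈ Finset.range N, σ * ((p i x - b) * (Q x - a))
              = (σ * (Q x - a)) * (∑ i ∈ Finset.range N, p i x - (N : ℝ) * b) := by
            calc ∑ i ∈ Finset.range N, σ * ((p i x - b) * (Q x - a))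
                = ∑ i ∈ Finset.range N, (σ * (Q x - a)) * (p i x - b) :=
                  Finset.sum_congr rfl (fun i _ => by ring)
              _ = (σ * (Q x - a)) * ∑ i ∈ Finset.range N, (p i x - b) := by
                  rw [Finset.mul_sum]
              _ = (σ * (Q x - a)) * (∑ i ∈ Finset.range N, p i x - (N : ℝ) * b) := by
                  rw [Finset.sum_sub_distrib, Finset.sum_const, Finset.card_range,
                    nsmul_eq_mul]
          rw [hsum1, hG, hH]
          have hNne : ((N : ℕ) : ℝ) ≠ 0 := ne_of_gt hNpos
          field_simp
        have hint_term : ∀ i, Integrable (fun x => σ * ((p i x - b) * (Q x - a))) μ := by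
          intro i
          apply aux_integrable_of_bdd (C := 4)
          · exact (((hmeas_p i).sub measurable_const).mul
              ((measurable_const.indicator hA).sub measurable_const)).const_mul σ
          · intro x
            have h1 : |p i x - b| ≤ 2 := by
              have := hbd_p i x
              rw [abs_le] at this ⊢
              constructor <;> linarith
            have h2 : |Q x - a| ≤ 2 := by
              by_cases h : x ∈ A
              · rw [hQ]; simp only [Set.indicator_of_mem h]
                rw [abs_le]; constructor <;> linarith
              · rw [hQ]; simp only [Set.indicator_of_notMem h]
                rw [abs_le]; constructor <;> linarith
            calc |σ * ((p i x - b) * (Q x - a))| = |σ| * (|p i x - b| * |Q x - a|) := by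
                  rw [abs_mul, abs_mul]
              _ ≤ 1 * (2 * 2) := by
                  apply mul_le_mul (le_of_eq hσ1) _ (by positivity) (by norm_num)
                  exact mul_le_mul h1 h2 (abs_nonneg _) (by norm_num)
              _ = 4 := by norm_num
        have hinner : ∫ x, G x * H x ∂μ = (1 / ((N : ℕ) : ℝ)) *
            ∑ i ∈ Finset.range N, σ * (c (φ i) - a * b) := by
          rw [show (fun x => G x * H x) = fun x => (1 / ((N : ℕ) : ℝ)) *
              ∑ i ∈ Finset.range N, σ * ((p i x - b) * (Q x - a)) from funext hGH_eq]
          rw [integral_const_mul]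
          congr 1
          rw [integral_finset_sum _ (fun i _ => hint_term i)]
          apply Finset.sum_congr rfl
          intro i _
          rw [integral_const_mul]
          congr 1
          have := aux_corr μ T hT hA hB (φ i)
          rw [this]
          congr 2
        have hlow : ε ≤ ∫ x, G x * H x ∂μ := by
          rw [hinner]
          have hterm : ∀ i ∈ Finset.range N, ε ≤ σ * (c (φ i) - a * b) := fun i _ => hφ i
          calc ε = (1 / ((N : ℕ) : ℝ)) * ∑ _i ∈ Finset.range N, ε := by
                rw [Finset.sum_const, Finset.card_range, nsmul_eq_mul]
                field_simp
            _ ≤ (1 / ((N : ℕ) : ℝ)) * ∑ i ∈ Finset.range N, σ * (c (φ i) - a * b) := by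
                apply mul_le_mul_of_nonneg_left (Finset.sum_le_sum hterm) (by positivity)
        -- Cauchy–Schwarz chain
        have hG_int : Integrable G μ := aux_integrable_of_bdd 2 hG_meas hG_bdd
        have hGH_int : Integrable (fun x => G x * H x) μ := by
          apply aux_integrable_of_bdd (C := 2) (hG_meas.mul hH_meas)
          intro x
          calc |G x * H x| = |G x| * |H x| := abs_mul _ _
            _ ≤ 2 * 1 := mul_le_mul (hG_bdd x) (hH_bdd x) (abs_nonneg _) (by norm_num)
            _ = 2 := by norm_num
        have habs1 : ε ≤ ∫ x, |G x| ∂μ := by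
          have h1 : ∫ x, G x * H x ∂μ ≤ |∫ x, G x * H x ∂μ| := le_abs_self _
          have h2 : |∫ x, G x * H x ∂μ| ≤ ∫ x, |G x| * |H x| ∂μ := by
            simpa [Real.norm_eq_abs, abs_mul] using
              norm_integral_le_integral_norm (μ := μ) (fun x => G x * H x)
          have h3 : ∫ x, |G x| * |H x| ∂μ ≤ ∫ x, |G x| ∂μ := by
            apply integral_mono ?_ hG_int.abs ?_
            · have habs_eq : (fun x => |G x| * |H x|) = fun x => |G x * H x| :=
                funext fun x => (abs_mul _ _).symm
              rw [habs_eq]; exact hGH_int.abs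
            · intro x
              calc |G x| * |H x| ≤ |G x| * 1 :=
                  mul_le_mul_of_nonneg_left (hH_bdd x) (abs_nonneg _)
                _ = |G x| := mul_one _
          linarith
        have hmem : MemLp (fun x => |G x|) 2 μ := by
          apply MemLp.of_bound hG_meas.abs.aestronglyMeasurable 2
          exact ae_of_all _ (fun x => by simpa [abs_abs] using hG_bdd x)
        have hvar := ProbabilityTheory.variance_nonneg (fun x => |G x|) μ
        rw [ProbabilityTheory.variance_eq_sub hmem] at hvar
        simp only [Pi.pow_apply] at hvar
        have hsq : (∫ x, |G x| ∂μ) ^ 2 ≤ ∫ x, |G x| ^ 2 ∂μ := by linarith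
        have heps2 : ε ^ 2 ≤ (∫ x, |G x| ∂μ) ^ 2 := by
          apply pow_le_pow_left₀ (le_of_lt hε) habs1
        linarith
      have hge := ge_of_tendsto' hTB key
      have : (0 : ℝ) < ε ^ 2 := by positivity
      linarith
  refine ⟨main, ?_, ?_⟩
  · intro hmix
    exact absurd hmix hnotmix
  · intro hall
    obtain ⟨r, s, h1, h2⟩ := main
    exact absurd (hall r s h1) h2
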